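/- Under the hypotheses of the previous statement (z², ζ² smooth with (z²_ξ)ᵀζ² = 0, (z²_x)ᵀζ² = ξ; ξ̂ smooth with ζ²(x, ξ̂(x;y,η)) = ζ¹(y,η); φ(x;y,η) = ⟨z²(x, ξ̂(x;y,η)) − z¹(y,η), ζ¹(y,η)⟩), assume in addition that the matrix ζ²_ξ(x, ξ̂(x;y,η)) is invertible for all (x;y,η) ∈ W. Then the mixed second-derivative matrix satisfies φ_{xη}(x;y,η) = (ζ²_ξ(x, ξ̂(x;y,η)))⁻¹ · ζ¹_η(y,η) for all (x;y,η) ∈ W. -/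

import Mathlib

open Matrix

/-- The continuous linear map `(u, v) ↦ A u + B v` on `ℝⁿ × ℝⁿ`; a map whose derivative at a
point has this form has Jacobian `A` in the first variable and `B` in the second. -/
noncomputable def jacCLM {n : ℕ} (A B : Matrix (Fin n) (Fin n) ℝ) :
    ((Fin n → ℝ) × (Fin n → ℝ)) →L[ℝ] (Fin n → ℝ) :=
  LinearMap.toContinuousLinearMap
    (A.mulVecLin.comp (LinearMap.fst ℝ (Fin n → ℝ) (Fin n → ℝ)) +
      B.mulVecLin.comp (LinearMap.snd ℝ (Fin n → ℝ) (Fin n → ℝ)))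

@[simp] lemma jacCLM_apply {n : ℕ} (A B : Matrix (Fin n) (Fin n) ℝ) (u v : Fin n → ℝ) :
    jacCLM A B (u, v) = A *ᵥ u + B *ᵥ v := rfl

noncomputable def dotD {n : ℕ} {E : Type*} [NormedAddCommGroup E] [NormedSpace ℝ E]
    (a b : Fin n → ℝ) (F G : E →L[ℝ] (Fin n → ℝ)) : E →L[ℝ] ℝ :=
  ∑ k, (b k • (ContinuousLinearMap.proj k).comp F + a k • (ContinuousLinearMap.proj k).comp G)

@[simp] lemma dotD_apply {n : ℕ} {E : Type*} [NormedAddCommGroup E] [NormedSpace ℝ E]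
    (a b : Fin n → ℝ) (F G : E →L[ℝ] (Fin n → ℝ)) (v : E) :
    dotD a b F G v = b ⬝ᵥ F v + a ⬝ᵥ G v := by
  simp [dotD, dotProduct, Finset.sum_add_distrib]

lemma hasFDerivAt_dot {n : ℕ} {E : Type*} [NormedAddCommGroup E] [NormedSpace ℝ E]
    {f g : E → Fin n → ℝ} {F G : E →L[ℝ] (Fin n → ℝ)} {x : E}
    (hf : HasFDerivAt f F x) (hg : HasFDerivAt g G x) :
    HasFDerivAt (fun x => f x ⬝ᵥ g x) (dotD (f x) (g x) F G) x := by
  have h : ∀ k : Fin n, HasFDerivAt (fun x => f x k * g x k)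
      (f x k • (ContinuousLinearMap.proj k).comp G + g x k • (ContinuousLinearMap.proj k).comp F) x :=
    fun k => (hasFDerivAt_pi'.1 hf k).mul (hasFDerivAt_pi'.1 hg k)
  have := HasFDerivAt.fun_sum (fun k (_ : k ∈ Finset.univ) => h k)
  simp only [dotProduct]
  convert this using 1
  · rfl
  · rfl
  unfold dotD
  exact Finset.sum_congr rfl fun k _ => add_comm _ _

/-- Under the hypotheses of Statement 10, if moreover `ζ²_ξ(x, ξ̂(x;y,η))`
is invertible on `W`, then the phase `φ(x;y,η) = ⟨z²(x, ξ̂(x;y,η)) − z¹(y,η), ζ¹(y,η)⟩` of the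
composition satisfies `φ_{xη}(x;y,η) = (ζ²_ξ(x, ξ̂(x;y,η)))⁻¹ · ζ¹_η(y,η)` on `W`. -/
theorem composition_phase_mixed_derivative (n : ℕ)
    (V U : Set ((Fin n → ℝ) × (Fin n → ℝ))) (hVopen : IsOpen V) (hUopen : IsOpen U)
    (z2 ζ2 : (Fin n → ℝ) × (Fin n → ℝ) → Fin n → ℝ)
    (hz2 : ContDiffOn ℝ (⊤ : ℕ∞) z2 V) (hζ2 : ContDiffOn ℝ (⊤ : ℕ∞) ζ2 V)
    (Z2x Z2ξ W2x W2ξ : (Fin n → ℝ) × (Fin n → ℝ) → Matrix (Fin n) (Fin n) ℝ)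
    (hdz2 : ∀ p ∈ V, HasFDerivAt z2 (jacCLM (Z2x p) (Z2ξ p)) p)
    (hdζ2 : ∀ p ∈ V, HasFDerivAt ζ2 (jacCLM (W2x p) (W2ξ p)) p)
    (hrel1 : ∀ p ∈ V, (Z2ξ p)ᵀ *ᵥ ζ2 p = 0)
    (hrel2 : ∀ p ∈ V, (Z2x p)ᵀ *ᵥ ζ2 p = p.2)
    (z1 ζ1 : (Fin n → ℝ) × (Fin n → ℝ) → Fin n → ℝ)
    (hz1 : ContDiffOn ℝ (⊤ : ℕ∞) z1 U) (hζ1 : ContDiffOn ℝ (⊤ : ℕ∞) ζ1 U)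
    (W1y W1η : (Fin n → ℝ) × (Fin n → ℝ) → Matrix (Fin n) (Fin n) ℝ)
    (hdζ1 : ∀ p ∈ U, HasFDerivAt ζ1 (jacCLM (W1y p) (W1η p)) p)
    (W : Set ((Fin n → ℝ) × ((Fin n → ℝ) × (Fin n → ℝ)))) (hWopen : IsOpen W)
    (hWU : ∀ q ∈ W, q.2 ∈ U)
    (ξhat : (Fin n → ℝ) × ((Fin n → ℝ) × (Fin n → ℝ)) → Fin n → ℝ)
    (hξhat : ContDiffOn ℝ (⊤ : ℕ∞) ξhat W)
    (hmemV : ∀ q ∈ W, (q.1, ξhat q) ∈ V)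
    (hζeq : ∀ q ∈ W, ζ2 (q.1, ξhat q) = ζ1 q.2)
    (φ : (Fin n → ℝ) × ((Fin n → ℝ) × (Fin n → ℝ)) → ℝ)
    (hφdef : ∀ q, φ q = (z2 (q.1, ξhat q) - z1 q.2) ⬝ᵥ ζ1 q.2)
    (hinv : ∀ q ∈ W, IsUnit (W2ξ (q.1, ξhat q))) :
    ∀ q ∈ W, ∀ i j : Fin n,
      fderiv ℝ (fun r => fderiv ℝ φ r (Pi.single i 1, 0, 0)) q (0, 0, Pi.single j 1) =
        ((W2ξ (q.1, ξhat q))⁻¹ * W1η q.2) i j := by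
  intro q hq i j
  have hdξ : ∀ r ∈ W, HasFDerivAt ξhat (fderiv ℝ ξhat r) r := fun r hr =>
    ((hξhat.contDiffAt (hWopen.mem_nhds hr)).differentiableAt (by simp)).hasFDerivAt
  have hg : ∀ r ∈ W, HasFDerivAt (fun r : (Fin n → ℝ) × ((Fin n → ℝ) × (Fin n → ℝ)) =>
      (r.1, ξhat r))
      ((ContinuousLinearMap.fst ℝ _ _).prod (fderiv ℝ ξhat r)) r := fun r hr =>
    HasFDerivAt.prodMk hasFDerivAt_fst (hdξ r hr)
  -- Step 1: first derivative of φ in x equals ξhat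
  have hB : ∀ r ∈ W, fderiv ℝ φ r (Pi.single i 1, 0, 0) = ξhat r i := by
    intro r hr
    have hrV := hmemV r hr
    have hrU := hWU r hr
    have hz2' : HasFDerivAt (fun r : (Fin n → ℝ) × ((Fin n → ℝ) × (Fin n → ℝ)) =>
        z2 (r.1, ξhat r))
        ((jacCLM (Z2x (r.1, ξhat r)) (Z2ξ (r.1, ξhat r))).comp
          ((ContinuousLinearMap.fst ℝ _ _).prod (fderiv ℝ ξhat r))) r :=
      (hdz2 _ hrV).comp r (hg r hr)
    have hz1' : HasFDerivAt (fun r : (Fin n → ℝ) × ((Fin n → ℝ) × (Fin n → ℝ)) => z1 r.2)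
        ((fderiv ℝ z1 r.2).comp (ContinuousLinearMap.snd ℝ _ _)) r :=
      (((hz1.contDiffAt (hUopen.mem_nhds hrU)).differentiableAt (by simp)).hasFDerivAt).comp r
        hasFDerivAt_snd
    have hζ1' : HasFDerivAt (fun r : (Fin n → ℝ) × ((Fin n → ℝ) × (Fin n → ℝ)) => ζ1 r.2)
        ((jacCLM (W1y r.2) (W1η r.2)).comp (ContinuousLinearMap.snd ℝ _ _)) r :=
      (hdζ1 _ hrU).comp r hasFDerivAt_snd
    have hφ' : HasFDerivAt φ
        (dotD (z2 (r.1, ξhat r) - z1 r.2) (ζ1 r.2)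
          ((jacCLM (Z2x (r.1, ξhat r)) (Z2ξ (r.1, ξhat r))).comp
            ((ContinuousLinearMap.fst ℝ _ _).prod (fderiv ℝ ξhat r)) -
            (fderiv ℝ z1 r.2).comp (ContinuousLinearMap.snd ℝ _ _))
          ((jacCLM (W1y r.2) (W1η r.2)).comp (ContinuousLinearMap.snd ℝ _ _))) r := by
      have h := hasFDerivAt_dot (hz2'.sub hz1') hζ1'
      have hfe : φ = fun r : (Fin n → ℝ) × ((Fin n → ℝ) × (Fin n → ℝ)) =>
          (z2 (r.1, ξhat r) - z1 r.2) ⬝ᵥ ζ1 r.2 := funext hφdef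
      rw [hfe]
      exact h
    rw [hφ'.fderiv, dotD_apply]
    simp only [ContinuousLinearMap.sub_apply, ContinuousLinearMap.comp_apply,
      ContinuousLinearMap.prod_apply, ContinuousLinearMap.coe_fst',
      ContinuousLinearMap.coe_snd', Prod.mk_zero_zero, map_zero,
      jacCLM_apply, sub_zero, dotProduct_zero, add_zero, mulVec_zero, zero_add]
    rw [← hζeq r hr]
    rw [show (ζ2 (r.1, ξhat r)) ⬝ᵥ
        (Z2x (r.1, ξhat r) *ᵥ Pi.single i 1 +
          Z2ξ (r.1, ξhat r) *ᵥ (fderiv ℝ ξhat r (Pi.single i 1, 0))) =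
        ((Z2x (r.1, ξhat r))ᵀ *ᵥ ζ2 (r.1, ξhat r)) ⬝ᵥ Pi.single i 1 +
        ((Z2ξ (r.1, ξhat r))ᵀ *ᵥ ζ2 (r.1, ξhat r)) ⬝ᵥ (fderiv ℝ ξhat r (Pi.single i 1, 0))
      from by rw [dotProduct_add, dotProduct_mulVec, dotProduct_mulVec, mulVec_transpose,
        mulVec_transpose]]
    rw [hrel1 _ hrV, hrel2 _ hrV]
    simp [dotProduct_single]
  -- Step 2: the η-derivative of ξhat
  have hA : fderiv ℝ ξhat q (0, 0, Pi.single j 1) =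
      ((W2ξ (q.1, ξhat q))⁻¹ * W1η q.2) *ᵥ Pi.single j 1 := by
    have h1 : HasFDerivAt (fun r : (Fin n → ℝ) × ((Fin n → ℝ) × (Fin n → ℝ)) =>
        ζ2 (r.1, ξhat r))
        ((jacCLM (W2x (q.1, ξhat q)) (W2ξ (q.1, ξhat q))).comp
          ((ContinuousLinearMap.fst ℝ _ _).prod (fderiv ℝ ξhat q))) q :=
      (hdζ2 _ (hmemV q hq)).comp q (hg q hq)
    have h2 : HasFDerivAt (fun r : (Fin n → ℝ) × ((Fin n → ℝ) × (Fin n → ℝ)) => ζ1 r.2)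
        ((jacCLM (W1y q.2) (W1η q.2)).comp (ContinuousLinearMap.snd ℝ _ _)) q :=
      (hdζ1 _ (hWU q hq)).comp q hasFDerivAt_snd
    have heq : (fun r : (Fin n → ℝ) × ((Fin n → ℝ) × (Fin n → ℝ)) => ζ2 (r.1, ξhat r)) =ᶠ[nhds q]
        (fun r => ζ1 r.2) :=
      Filter.eventuallyEq_of_mem (hWopen.mem_nhds hq) (fun r hr => hζeq r hr)
    have h3 : HasFDerivAt (fun r : (Fin n → ℝ) × ((Fin n → ℝ) × (Fin n → ℝ)) => ζ1 r.2)
        ((jacCLM (W2x (q.1, ξhat q)) (W2ξ (q.1, ξhat q))).comp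
          ((ContinuousLinearMap.fst ℝ _ _).prod (fderiv ℝ ξhat q))) q :=
      h1.congr_of_eventuallyEq heq.symm
    have hDeq := h3.unique h2
    have key := congrArg (fun L : ((Fin n → ℝ) × ((Fin n → ℝ) × (Fin n → ℝ))) →L[ℝ]
        (Fin n → ℝ) => L (0, 0, Pi.single j 1)) hDeq
    simp only [ContinuousLinearMap.comp_apply, ContinuousLinearMap.prod_apply,
      ContinuousLinearMap.coe_fst', ContinuousLinearMap.coe_snd', jacCLM_apply,
      mulVec_zero, zero_add] at key
    -- key : W2x *ᵥ 0 + W2ξ *ᵥ (Dξ v) = W1y *ᵥ 0 + W1η *ᵥ e_j  (after simp)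
    have hu : IsUnit (W2ξ (q.1, ξhat q)).det :=
      (Matrix.isUnit_iff_isUnit_det _).1 (hinv q hq)
    calc fderiv ℝ ξhat q (0, 0, Pi.single j 1)
        = ((W2ξ (q.1, ξhat q))⁻¹ * W2ξ (q.1, ξhat q)) *ᵥ fderiv ℝ ξhat q (0, 0, Pi.single j 1) := by
          rw [Matrix.nonsing_inv_mul _ hu, Matrix.one_mulVec]
      _ = (W2ξ (q.1, ξhat q))⁻¹ *ᵥ (W2ξ (q.1, ξhat q) *ᵥ fderiv ℝ ξhat q (0, 0, Pi.single j 1)) := by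
          rw [Matrix.mulVec_mulVec]
      _ = (W2ξ (q.1, ξhat q))⁻¹ *ᵥ (W1η q.2 *ᵥ Pi.single j 1) := by rw [key]
      _ = ((W2ξ (q.1, ξhat q))⁻¹ * W1η q.2) *ᵥ Pi.single j 1 := by rw [Matrix.mulVec_mulVec]
  -- Conclusion
  have heqF : (fun r => fderiv ℝ φ r (Pi.single i 1, 0, 0)) =ᶠ[nhds q]
      (fun r => ξhat r i) :=
    Filter.eventuallyEq_of_mem (hWopen.mem_nhds hq) hB
  rw [heqF.fderiv_eq]
  have hx : HasFDerivAt (fun r => ξhat r i)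
      ((ContinuousLinearMap.proj i).comp (fderiv ℝ ξhat q)) q :=
    hasFDerivAt_pi'.1 (hdξ q hq) i
  rw [hx.fderiv]
  simp [hA, mulVec_single_one]
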